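/- Let F and G be the 2×2 Hermitian matrices F_{jk} = ⟨ψ_j|ψ₀⟩⟨ψ₁|ψ_k⟩ + ⟨ψ_j|ψ₁⟩⟨ψ₀|ψ_k⟩ and G_{jk} = ⟨ψ_j|ψ_k⟩, where ψ₀(x) = 1 and ψ₁(x) = x on [−√α, 0] (so ⟨ψ₀|ψ₀⟩ = √α, ⟨ψ₀|ψ₁⟩ = −α/2, ⟨ψ₁|ψ₁⟩ = α^{3/2}/3). Then the smallest λ with λG − F ⪰ 0 equals ((2√3 − 3)/6)·α. -/

import Mathlib

open Matrix

/-- With `⟨ψ₀|ψ₀⟩ = √α`, `⟨ψ₀|ψ₁⟩ = -α/2`, `⟨ψ₁|ψ₁⟩ = α^{3/2}/3`, the least `λ` with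
`λG - F ⪰ 0` (for `F_{jk} = ⟨ψ_j|ψ₀⟩⟨ψ₁|ψ_k⟩ + ⟨ψ_j|ψ₁⟩⟨ψ₀|ψ_k⟩` and `G` the Gram matrix)
equals `((2√3 - 3)/6)·α`. -/
theorem stmt13 (α : ℝ) (hα : 0 < α) :
    IsLeast {l : ℝ |
      (l • (!![Real.sqrt α, -α / 2; -α / 2, α * Real.sqrt α / 3]) -
        !![2 * Real.sqrt α * (-α / 2),
            Real.sqrt α * (α * Real.sqrt α / 3) + (-α / 2) ^ 2;
           α * Real.sqrt α / 3 * Real.sqrt α + (-α / 2) ^ 2,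
            2 * (-α / 2) * (α * Real.sqrt α / 3)]).PosSemidef}
      ((2 * Real.sqrt 3 - 3) / 6 * α) := by
  set s := Real.sqrt α with hsdef
  set t := Real.sqrt 3 with htdef
  have hs0 : 0 < s := Real.sqrt_pos.mpr hα
  have hs : s ^ 2 = α := Real.sq_sqrt hα.le
  have ht0 : 0 < t := Real.sqrt_pos.mpr (by norm_num)
  have ht : t ^ 2 = 3 := Real.sq_sqrt (by norm_num)
  have ht32 : (3:ℝ)/2 < t := by nlinarith
  constructor
  · refine Matrix.posSemidef_iff_dotProduct_mulVec.mpr ⟨?_, ?_⟩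
    · ext i j
      fin_cases i <;> fin_cases j <;>
        simp [Matrix.conjTranspose_apply, Matrix.sub_apply, Matrix.smul_apply] <;> ring
    · intro x
      set l := (2 * t - 3) / 6 * α with hldef
      have key : 0 ≤ s*(l+α)*(x 0)^2 - (α*l + 7*α^2/6)*(x 0 * x 1) + α*s*(l+α)/3*(x 1)^2 := by
        have eq2 : 6*s*(2*t+3)*(s*(l+α)*(x 0)^2 - (α*l + 7*α^2/6)*(x 0 * x 1) + α*s*(l+α)/3*(x 1)^2)
            = α*(s*(2*t+3)*(x 0) - α*(t+2)*(x 1))^2 := by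
          rw [hldef]
          linear_combination (α^2*(2*t+3)^2/3*(x 1)^2) * hs + (α^3/3*(x 1)^2) * ht
        have h6 : 0 < 6*s*(2*t+3) := by positivity
        nlinarith [eq2, h6, mul_nonneg hα.le (sq_nonneg (s*(2*t+3)*(x 0) - α*(t+2)*(x 1)))]
      have e : (x 0 * ((l * s - 2 * s * (-α / 2)) * x 0 +
            (l * (-α / 2) - (s * (α * s / 3) + (-α / 2) ^ 2)) * x 1) +
          x 1 * ((l * (-α / 2) - (α * s / 3 * s + (-α / 2) ^ 2)) * x 0 +
            (l * (α * s / 3) - 2 * (-α / 2) * (α * s / 3)) * x 1))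
          = s*(l+α)*(x 0)^2 - (α*l + 7*α^2/6)*(x 0 * x 1) + α*s*(l+α)/3*(x 1)^2 := by
        linear_combination (-(2*α*(x 0)*(x 1))/3) * hs
      simp [dotProduct, Matrix.mulVec, Fin.sum_univ_two, Matrix.sub_apply,
        Matrix.smul_apply]
      linarith [key, e]
  · rintro l hl
    have hQ : ∀ u v : ℝ, 0 ≤ s*(l+α)*u^2 - (α*l + 7*α^2/6)*(u*v) + α*s*(l+α)/3*v^2 := by
      intro u v
      have hx := Matrix.PosSemidef.dotProduct_mulVec_nonneg hl ![u, v]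
      simp [dotProduct, Matrix.mulVec, Fin.sum_univ_two, Matrix.sub_apply,
        Matrix.smul_apply] at hx
      have e : (u * ((l * s - 2 * s * (-α / 2)) * u +
            (l * (-α / 2) - (s * (α * s / 3) + (-α / 2) ^ 2)) * v) +
          v * ((l * (-α / 2) - (α * s / 3 * s + (-α / 2) ^ 2)) * u +
            (l * (α * s / 3) - 2 * (-α / 2) * (α * s / 3)) * v))
          = s*(l+α)*u^2 - (α*l + 7*α^2/6)*(u*v) + α*s*(l+α)/3*v^2 := by
        linear_combination (-(2*α*u*v)/3) * hs
      linarith [hx, e]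
    have h1 : 0 ≤ s*(l+α) := by have := hQ 1 0; nlinarith [this]
    by_contra hlt
    push_neg at hlt
    have hla : 0 ≤ l + α := by
      by_contra hc
      push_neg at hc
      nlinarith [mul_pos hs0 (neg_pos.mpr hc)]
    have p1 : 0 < (2*t-3)/6*α - l := by linarith
    have p2 : 0 < l + (2*t+3)/6*α := by nlinarith [mul_pos (show (0:ℝ) < 2*t-3 by linarith) hα]
    have hf : 12*l^2 + 12*α*l - α^2 < 0 := by nlinarith [mul_pos p1 p2]
    have h2' : 0 ≤ s*(l+α)*(α^2*(12*l^2+12*α*l-α^2))/36 := by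
      have hx := hQ (α*l + 7*α^2/6) (2*s*(l+α))
      have e2 : s*(l+α)*(α*l + 7*α^2/6)^2 - (α*l + 7*α^2/6)*((α*l + 7*α^2/6)*(2*s*(l+α)))
            + α*s*(l+α)/3*(2*s*(l+α))^2
          = s*(l+α)*(α^2*(12*l^2+12*α*l-α^2))/36 := by
        linear_combination ((4:ℝ)/3*α*s*(l+α)^3) * hs
      linarith [hx, e2]
    have hle : s*(l+α) ≤ 0 := by
      by_contra hc
      push_neg at hc
      have hgpos : 0 < -(12*l^2+12*α*l-α^2) := by linarith
      have hp := mul_pos hc (mul_pos (mul_pos hα hα) hgpos)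
      linarith only [h2', hp]
    have heq : s*(l+α) = 0 := le_antisymm hle h1
    have hl0 : l = -α := by
      rcases mul_eq_zero.mp heq with h | h
      · exact absurd h hs0.ne'
      · linarith
    subst hl0
    have h3 := hQ 1 1
    nlinarith [h3, mul_pos hα hα]
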